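/- Let K : ℝ → ℝ be an even, bounded, integrable function whose Fourier transform K̂(t) = ∫ e^{−2πitx} K(x) dx is strictly negative at every point of a set A ⊆ ℝ of strictly positive, finite Lebesgue measure. Then there exists a real-valued function φ ∈ L¹(ℝ) ∩ L²(ℝ) such that ∫∫ φ(x) φ(y) K(x−y) dx dy < 0. -/

import Mathlib

open MeasureTheory Real Complex

open FourierTransform

section AuxNPD

lemma mult_formula {f g : ℝ → ℂ} (hf : Integrable f) (hg : Integrable g) :
    ∫ ξ, 𝓕 f ξ * g ξ = ∫ x, f x * 𝓕 g x := by
  have hL : Continuous fun p : ℝ × ℝ ↦ (innerₗ ℝ) p.1 p.2 := continuous_inner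
  have h := VectorFourier.integral_fourierIntegral_smul_eq_flip (μ := volume) (ν := volume)
    Real.continuous_fourierChar hL hf hg
  simp only [smul_eq_mul] at h
  convert h using 2 with x
  congr 1
  simp only [Real.fourier_eq, VectorFourier.fourierIntegral]
  congr 1 with v
  congr 2
  simp [LinearMap.flip_apply, real_inner_comm]
  rfl

lemma cont_fourier {f : ℝ → ℂ} (hf : Integrable f) : Continuous (𝓕 f) :=
  VectorFourier.fourierIntegral_continuous Real.continuous_fourierChar
    (by exact continuous_inner) hf

lemma norm_fourier_le (f : ℝ → ℂ) (x : ℝ) : ‖𝓕 f x‖ ≤ ∫ v, ‖f v‖ :=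
  VectorFourier.norm_fourierIntegral_le_integral_norm _ _ _ _ _

lemma fourier_comp_neg (f : ℝ → ℂ) (t : ℝ) :
    𝓕 (fun y => f (-y)) t = 𝓕 f (-t) := by
  rw [← Real.fourierInv_eq_fourier_comp_neg,
    Real.fourierInv_eq_fourier_neg]

lemma fourier_conj (g : ℝ → ℝ) (x : ℝ) :
    (starRingEnd ℂ) (𝓕 (fun t => (g t : ℂ)) x) = 𝓕 (fun t => (g t : ℂ)) (-x) := by
  rw [Real.fourier_real_eq_integral_exp_smul,
    Real.fourier_real_eq_integral_exp_smul, ← integral_conj]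
  congr 1 with v
  rw [smul_eq_mul, smul_eq_mul, map_mul, ← Complex.exp_conj, Complex.conj_ofReal]
  congr 2
  · rw [map_mul, Complex.conj_ofReal, Complex.conj_I]
    push_cast; ring

lemma fourier_shift (f : ℝ → ℂ) (x t : ℝ) :
    𝓕 (fun y => f (x - y)) t = 𝐞 (-(x * t)) • 𝓕 f (-t) := by
  have h1 : (fun y => f (x - y)) = ((fun y => f (-y)) ∘ fun v => v + (-x)) := by
    ext y; congr 1; ring
  rw [h1]
  have := VectorFourier.fourierIntegral_comp_add_right 𝐞 (volume : Measure ℝ)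
    (innerₗ ℝ) (fun y => f (-y)) (-x)
  have h2 : 𝓕 ((fun y => f (-y)) ∘ fun v => v + (-x)) t
      = 𝐞 ((innerₗ ℝ) (-x) t) • 𝓕 (fun y => f (-y)) t := congrFun this t
  rw [h2, fourier_comp_neg]
  norm_num [real_inner_comm]
  rw [mul_comm t x]

lemma hcs_iteratedDeriv {f : ℝ → ℂ} (hsupp : HasCompactSupport f) (n : ℕ) :
    HasCompactSupport (iteratedDeriv n f) := by
  induction n with
  | zero => simpa [iteratedDeriv_zero] using hsupp
  | succ n ih => rw [iteratedDeriv_succ]; exact ih.deriv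

lemma integrable_iteratedDeriv {f : ℝ → ℂ} (hf : ContDiff ℝ (⊤ : ℕ∞) f)
    (hsupp : HasCompactSupport f) (n : ℕ) : Integrable (iteratedDeriv n f) :=
  (hf.continuous_iteratedDeriv n (by exact_mod_cast le_top)).integrable_of_hasCompactSupport
    (hcs_iteratedDeriv hsupp n)

lemma fourier_decay_integrable {f : ℝ → ℂ} (hf : ContDiff ℝ (⊤ : ℕ∞) f)
    (hsupp : HasCompactSupport f) : Integrable (𝓕 f) := by
  have hint : Integrable f := hf.continuous.integrable_of_hasCompactSupport hsupp
  set C₁ : ℝ := ∫ v, ‖f v‖ with hC₁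
  set C₂ : ℝ := (∫ v, ‖iteratedDeriv 2 f v‖) / (4 * π ^ 2) with hC₂
  have hπ : (0:ℝ) < 4 * π ^ 2 := by positivity
  have key : 𝓕 (iteratedDeriv 2 f) = fun (x : ℝ) ↦ (2 * π * I * x) ^ 2 • (𝓕 f x) :=
    Real.fourier_iteratedDeriv (N := (⊤ : ℕ∞)) hf
      (fun n _ => integrable_iteratedDeriv hf hsupp n) le_top
  have hb1 : ∀ x : ℝ, ‖𝓕 f x‖ ≤ C₁ := fun x => norm_fourier_le f x
  have hb2 : ∀ x : ℝ, x ^ 2 * ‖𝓕 f x‖ ≤ C₂ := by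
    intro x
    have h1 : ‖𝓕 (iteratedDeriv 2 f) x‖ ≤ ∫ v, ‖iteratedDeriv 2 f v‖ :=
      norm_fourier_le (iteratedDeriv 2 f) x
    have h2 : ‖𝓕 (iteratedDeriv 2 f) x‖ = 4 * π ^ 2 * (x ^ 2 * ‖𝓕 f x‖) := by
      rw [key]
      simp only [norm_smul, norm_pow, norm_mul, Complex.norm_I, mul_one,
        Complex.norm_real, Complex.norm_ofNat, Real.norm_eq_abs]
      rw [← _root_.sq_abs π, ← _root_.sq_abs x]
      ring
    rw [h2] at h1
    rw [hC₂, le_div_iff₀ hπ]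
    linarith
  have hbound : ∀ x : ℝ, ‖𝓕 f x‖ ≤ (C₁ + C₂) * (1 + x ^ 2)⁻¹ := by
    intro x
    have h3 : (1 + x ^ 2) * ‖𝓕 f x‖ ≤ C₁ + C₂ := by
      have := hb1 x; have := hb2 x; nlinarith [norm_nonneg (𝓕 f x)]
    have h4 : (0:ℝ) < 1 + x ^ 2 := by positivity
    have h5 := (le_div_iff₀ h4).mpr (by linarith : ‖𝓕 f x‖ * (1 + x ^ 2) ≤ C₁ + C₂)
    simpa [div_eq_mul_inv] using h5
  refine Integrable.mono' ((integrable_inv_one_add_sq).const_mul (C₁ + C₂))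
    ((cont_fourier hint).aestronglyMeasurable) (ae_of_all _ ?_)
  intro x
  simpa [mul_comm] using hbound x

end AuxNPD

/-- **Non-positive-definite kernels admit a test function with negative energy.**
If `K : ℝ → ℝ` is even, bounded and integrable, and its Fourier transform
`K̂(t) = ∫ e^{−2πitx} K(x) dx` is strictly negative on a set `A` of strictly positive
finite Lebesgue measure, then there is a real `φ ∈ L¹ ∩ L²` with
`∫∫ φ(x) φ(y) K(x−y) dx dy < 0`. -/
theorem nonposdef_kernel_negative_quadratic_form
    (K : ℝ → ℝ) (heven : ∀ x, K (-x) = K x)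
    (hbdd : ∃ C : ℝ, ∀ x, |K x| ≤ C)
    (hint : Integrable K)
    (A : Set ℝ) (hmeas : MeasurableSet A)
    (hpos : 0 < volume A) (hfin : volume A < ⊤)
    (hneg : ∀ t ∈ A, (FourierTransform.fourier (fun x => (K x : ℂ)) t).re < 0) :
    ∃ φ : ℝ → ℝ, Integrable φ ∧ MemLp φ 2 volume ∧
      (∫ x, ∫ y, φ x * φ y * K (x - y)) < 0 := by
  obtain ⟨C, hC⟩ := hbdd
  set Kc : ℝ → ℂ := fun x => (K x : ℂ) with hKc_def
  have hKc : Integrable Kc := hint.ofReal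
  have hKc_cont : Continuous (𝓕 Kc) := cont_fourier hKc
  set r : ℝ → ℝ := fun t => (𝓕 Kc t).re with hr_def
  have hr_cont : Continuous r := Complex.continuous_re.comp hKc_cont
  have hKeven : ∀ t, 𝓕 Kc (-t) = 𝓕 Kc t := by
    intro t
    rw [← fourier_comp_neg]
    refine congrFun (congrArg (𝓕 : (ℝ → ℂ) → ℝ → ℂ) (funext fun y => ?_)) t
    simp [hKc_def, heven]
  have hr_even : ∀ t, r (-t) = r t := by intro t; rw [hr_def]; simp [hKeven t]
  -- pick t₀ and δ
  have hAne : A.Nonempty := nonempty_of_measure_ne_zero hpos.ne'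
  obtain ⟨t₀, ht₀⟩ := hAne
  have hrt₀ : r t₀ < 0 := hneg t₀ ht₀
  have hUopen : IsOpen {t : ℝ | r t < 0} := isOpen_lt hr_cont continuous_const
  obtain ⟨δ, hδpos, hball⟩ := Metric.isOpen_iff.mp hUopen t₀ hrt₀
  -- bump function
  set b : ContDiffBump t₀ := ⟨δ / 2, δ, by positivity, by linarith⟩ with hb_def
  set g : ℝ → ℝ := fun t => b t + b (-t) with hg_def
  set gc : ℝ → ℂ := fun t => (g t : ℂ) with hgc_def
  have hg_even : ∀ t, g (-t) = g t := by intro t; simp [hg_def, add_comm]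
  have hg_smooth : ContDiff ℝ (⊤ : ℕ∞) g := by
    have h1 : ContDiff ℝ (⊤ : ℕ∞) (fun t : ℝ => b (-t)) := b.contDiff.comp contDiff_neg
    exact b.contDiff.add h1
  have hg_supp : HasCompactSupport g :=
    b.hasCompactSupport.add (b.hasCompactSupport.comp_homeomorph (Homeomorph.neg ℝ))
  have hg_nonneg : ∀ t, 0 ≤ g t := fun t => add_nonneg (b.nonneg' t) (b.nonneg' (-t))
  have hgc_smooth : ContDiff ℝ (⊤ : ℕ∞) gc := Complex.ofRealCLM.contDiff.comp hg_smooth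
  have hgc_supp : HasCompactSupport gc := hg_supp.comp_left (g := Complex.ofReal) rfl
  have hgc_cont : Continuous gc := hgc_smooth.continuous
  have hgc_int : Integrable gc := hgc_cont.integrable_of_hasCompactSupport hgc_supp
  set Φ : ℝ → ℂ := 𝓕 gc with hΦ_def
  have hΦ_int : Integrable Φ := fourier_decay_integrable hgc_smooth hgc_supp
  have hΦ_cont : Continuous Φ := cont_fourier hgc_int
  -- Φ is real, even
  have hgc_even : ∀ t, gc (-t) = gc t := by intro t; simp [hgc_def, hg_even]
  have hΦ_even : ∀ x, Φ (-x) = Φ x := by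
    intro x
    rw [hΦ_def, ← fourier_comp_neg]
    refine congrFun (congrArg (𝓕 : (ℝ → ℂ) → ℝ → ℂ) (funext fun y => ?_)) x
    exact hgc_even y
  have hΦ_real : ∀ x, ((Φ x).re : ℂ) = Φ x := by
    intro x
    rw [← Complex.conj_eq_iff_re]
    calc (starRingEnd ℂ) (Φ x) = 𝓕 gc (-x) := by exact fourier_conj g x
    _ = Φ x := hΦ_even x
  set φ : ℝ → ℝ := fun x => (Φ x).re with hφ_def
  have hφ_cont : Continuous φ := Complex.continuous_re.comp hΦ_cont
  have hφ_int : Integrable φ := hΦ_int.re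
  have hφΦ : ∀ x, ((φ x : ℝ) : ℂ) = Φ x := fun x => hΦ_real x
  -- φ bounded
  set Cg : ℝ := ∫ v, ‖gc v‖ with hCg_def
  have hφ_bdd : ∀ x, |φ x| ≤ Cg := by
    intro x
    calc |φ x| ≤ ‖Φ x‖ := by rw [hφ_def]; exact Complex.abs_re_le_norm _
    _ ≤ Cg := norm_fourier_le gc x
  -- Memℒp 2
  have hφ_sq : Integrable (fun x => φ x ^ 2) := by
    refine Integrable.mono' (hφ_int.norm.const_mul Cg) ((hφ_cont.pow 2).aestronglyMeasurable)
      (ae_of_all _ fun x => ?_)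
    have h1 : |φ x ^ 2| = |φ x| * |φ x| := by
      rw [_root_.abs_of_nonneg (sq_nonneg _), ← _root_.sq_abs (φ x), sq]
    rw [Real.norm_eq_abs, h1, Real.norm_eq_abs]
    exact mul_le_mul_of_nonneg_right (hφ_bdd x) (abs_nonneg _)
  have hφ_mem : MemLp φ 2 volume :=
    (memLp_two_iff_integrable_sq hφ_cont.aestronglyMeasurable).mpr hφ_sq
  refine ⟨φ, hφ_int, hφ_mem, ?_⟩
  -- bound on 𝓕 Kc
  set CK : ℝ := ∫ v, ‖Kc v‖ with hCK_def
  have hFK_bdd : ∀ t, ‖𝓕 Kc t‖ ≤ CK := fun t => norm_fourier_le Kc t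
  -- h = gc * 𝓕 Kc
  set h : ℝ → ℂ := fun t => gc t * 𝓕 Kc t with hh_def
  have hh_int : Integrable h := by
    have h2 := hgc_int.bdd_mul (hKc_cont.aestronglyMeasurable) (ae_of_all _ hFK_bdd)
    exact h2.congr (Filter.Eventually.of_forall fun x => mul_comm _ _)
  -- inner identity
  have inner_eq : ∀ x : ℝ, (∫ y, φ x * φ y * K (x - y)) = (Φ x * 𝓕 h x).re := by
    intro x
    have hKx_int : Integrable (fun y => Kc (x - y)) :=
      (integrable_comp_sub_left Kc x).mpr hKc
    have hI1 : Integrable (fun y => Φ y * Kc (x - y)) :=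
      hKx_int.bdd_mul hΦ_cont.aestronglyMeasurable (ae_of_all _ fun y => norm_fourier_le gc y)
    have step2 : (∫ y, Φ y * Kc (x - y)) = 𝓕 h x := by
      rw [hΦ_def, mult_formula hgc_int hKx_int]
      rw [Real.fourier_real_eq]
      congr 1 with t
      rw [fourier_shift Kc x t, hKeven t]
      have : -(t * x) = -(x * t) := by ring
      rw [this]
      simp only [Circle.smul_def, smul_eq_mul, hh_def]
      ring
    calc (∫ y, φ x * φ y * K (x - y))
        = ∫ y, (Φ x * (Φ y * Kc (x - y))).re := by
          congr 1 with y
          rw [← hφΦ x, ← hφΦ y]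
          simp only [hKc_def, ← Complex.ofReal_mul, Complex.ofReal_re]
          ring
      _ = (∫ y, Φ x * (Φ y * Kc (x - y))).re := by
          exact ContinuousLinearMap.integral_comp_comm Complex.reCLM
            (hI1.const_mul (Φ x))
      _ = (Φ x * ∫ y, Φ y * Kc (x - y)).re := by rw [integral_const_mul]
      _ = (Φ x * 𝓕 h x).re := by rw [step2]
  -- outer
  have hO_int : Integrable (fun x => Φ x * 𝓕 h x) := by
    have h2 := hΦ_int.bdd_mul (cont_fourier hh_int).aestronglyMeasurable
      (ae_of_all _ fun x => norm_fourier_le h x)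
    exact h2.congr (Filter.Eventually.of_forall fun x => mul_comm _ _)
  have hhg_int : Integrable (fun t => h t * gc t) := by
    have : ∀ t, ‖gc t‖ ≤ 2 := by
      intro t
      rw [hgc_def, Complex.norm_real, Real.norm_eq_abs, _root_.abs_of_nonneg (hg_nonneg t)]
      calc g t = b t + b (-t) := rfl
      _ ≤ 1 + 1 := add_le_add b.le_one b.le_one
      _ = 2 := by norm_num
    have h2 := hh_int.bdd_mul hgc_cont.aestronglyMeasurable (ae_of_all _ this)
    exact h2.congr (Filter.Eventually.of_forall fun x => mul_comm _ _)
  have outer_eq : (∫ x, ∫ y, φ x * φ y * K (x - y)) = ∫ t, g t ^ 2 * r t := by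
    have e1 : (∫ x, ∫ y, φ x * φ y * K (x - y)) = ∫ x, (Φ x * 𝓕 h x).re := by
      congr 1 with x; exact inner_eq x
    rw [e1]
    have e2 : ∫ x, (Φ x * 𝓕 h x).re = (∫ x, Φ x * 𝓕 h x).re := by
      exact ContinuousLinearMap.integral_comp_comm Complex.reCLM hO_int
    rw [e2]
    have e3 : ∫ x, Φ x * 𝓕 h x = ∫ t, h t * gc t := by
      have hm := mult_formula hh_int hΦ_int
      have hcomm : (∫ x, Φ x * 𝓕 h x) = ∫ ξ, 𝓕 h ξ * Φ ξ := by
        congr 1 with ξ; ring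
      rw [hcomm, hm]
      congr 1 with t
      congr 1
      have hinv : 𝓕⁻ (𝓕 gc) = gc := hgc_cont.fourierInv_fourier_eq hgc_int hΦ_int
      calc 𝓕 Φ t = 𝓕⁻ (𝓕 gc) (-t) := by
            rw [Real.fourierInv_eq_fourier_neg, neg_neg, hΦ_def]
      _ = gc (-t) := by rw [hinv]
      _ = gc t := hgc_even t
    rw [e3]
    have e4 : ∀ t, ((h t * gc t).re) = g t ^ 2 * r t := by
      intro t
      have : h t * gc t = ((g t ^ 2 : ℝ) : ℂ) * 𝓕 Kc t := by
        rw [hh_def, hgc_def]; push_cast; ring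
      rw [this, Complex.re_ofReal_mul, hr_def]
    have e5 : (∫ t, h t * gc t).re = ∫ t, (h t * gc t).re :=
      (ContinuousLinearMap.integral_comp_comm Complex.reCLM hhg_int).symm
    rw [e5]
    congr 1 with t
    exact e4 t
  rw [outer_eq]
  -- final negativity
  set u : ℝ → ℝ := fun t => g t ^ 2 * r t with hu_def
  have hu_cont : Continuous u := ((hg_smooth.continuous).pow 2).mul hr_cont
  have hu_supp : HasCompactSupport u := by
    have h1 : HasCompactSupport (fun t => g t ^ 2) :=
      hg_supp.comp_left (g := fun s : ℝ => s ^ 2) (by norm_num)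
    exact h1.mul_right
  have hu_int : Integrable u := hu_cont.integrable_of_hasCompactSupport hu_supp
  have hsupp_b : Function.support (b : ℝ → ℝ) = Metric.ball t₀ δ := b.support_eq
  have hu_nonpos : ∀ t, u t ≤ 0 := by
    intro t
    by_cases hgt : g t = 0
    · simp [hu_def, hgt]
    · have hrt : r t < 0 := by
        have : b t ≠ 0 ∨ b (-t) ≠ 0 := by
          by_contra hcon
          push_neg at hcon
          exact hgt (by rw [hg_def]; simp [hcon.1, hcon.2])
        rcases this with h1 | h1
        · exact hball (by rw [← hsupp_b]; exact h1)
        · have : -t ∈ Metric.ball t₀ δ := by rw [← hsupp_b]; exact h1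
          have := hball this
          rw [← hr_even t]
          exact this
      exact mul_nonpos_of_nonneg_of_nonpos (sq_nonneg _) hrt.le
  have hu_t₀ : u t₀ < 0 := by
    have hb1 : b t₀ = 1 := b.one_of_mem_closedBall (Metric.mem_closedBall_self (by positivity))
    have hg_pos : 0 < g t₀ := by
      rw [hg_def]
      simp only
      nlinarith [b.nonneg' (-t₀)]
    exact mul_neg_of_pos_of_neg (by positivity) hrt₀
  have hneg_int : 0 < ∫ t, -u t := by
    refine (integral_pos_iff_support_of_nonneg
      (fun t => neg_nonneg.mpr (hu_nonpos t)) hu_int.neg).mpr ?_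
    have hopen : IsOpen (Function.support fun t => -u t) := by
      have : Continuous fun t => -u t := hu_cont.neg
      exact this.isOpen_support
    refine hopen.measure_pos volume ⟨t₀, ?_⟩
    simp only [Function.mem_support, neg_ne_zero]
    exact hu_t₀.ne
  rw [integral_neg] at hneg_int
  linarith
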